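/- Geodesic reachability by rolling on the Lorentzian sphere: let m ≥ 2 and let x0, x1 ∈ ℝ^{m+1} satisfy ⟨x0,x0⟩_J = ⟨x1,x1⟩_J = 1. If either ⟨x0,x1⟩_J > −1 or x1 = −x0, then there exist a vector u ∈ ℝ^{m+1} with ⟨u,x0⟩_J = 0 and a time t1 > 0 such that exp(t1 (u x0ᵗ − x0 uᵗ) J) x0 = x1; that is, x1 is geodesically reachable by rolling from x0. -/

import Mathlib

open Matrix Real
open scoped Nat

noncomputable section

/-- `J = diag(-1, I_m)` on `ℝ^{m+1}`. -/
def lorJ (m : ℕ) : Matrix (Fin (m+1)) (Fin (m+1)) ℝ :=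
  Matrix.diagonal (fun i => if i = 0 then (-1 : ℝ) else 1)

/-- The scalar product `⟨x,y⟩_J = xᵗ J y`. -/
def lorIp {m : ℕ} (x y : Fin (m+1) → ℝ) : ℝ :=
  x ⬝ᵥ (lorJ m) *ᵥ y

namespace LorAux

variable {m : ℕ}

lemma lorIp_eq (x y : Fin (m+1) → ℝ) :
    lorIp x y = ∑ i, x i * ((if i = 0 then (-1:ℝ) else 1) * y i) := by
  simp [lorIp, lorJ, dotProduct, mulVec_diagonal]

lemma lorIp_comm (x y : Fin (m+1) → ℝ) : lorIp x y = lorIp y x := by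
  simp only [lorIp_eq]
  exact Finset.sum_congr rfl fun i _ => by ring

lemma lorIp_add_left (x y z : Fin (m+1) → ℝ) :
    lorIp (x + y) z = lorIp x z + lorIp y z := by
  simp [lorIp, add_dotProduct]

lemma lorIp_sub_left (x y z : Fin (m+1) → ℝ) :
    lorIp (x - y) z = lorIp x z - lorIp y z := by
  simp [lorIp, sub_dotProduct]

lemma lorIp_smul_left (c : ℝ) (x z : Fin (m+1) → ℝ) :
    lorIp (c • x) z = c * lorIp x z := by
  simp [lorIp, smul_dotProduct, smul_eq_mul]

lemma lorIp_add_right (x y z : Fin (m+1) → ℝ) :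
    lorIp x (y + z) = lorIp x y + lorIp x z := by
  rw [lorIp_comm, lorIp_add_left, lorIp_comm y x, lorIp_comm z x]

lemma lorIp_sub_right (x y z : Fin (m+1) → ℝ) :
    lorIp x (y - z) = lorIp x y - lorIp x z := by
  rw [lorIp_comm, lorIp_sub_left, lorIp_comm y x, lorIp_comm z x]

lemma lorIp_smul_right (c : ℝ) (x z : Fin (m+1) → ℝ) :
    lorIp x (c • z) = c * lorIp x z := by
  rw [lorIp_comm, lorIp_smul_left, lorIp_comm z x]

lemma lorIp_neg_right (x y : Fin (m+1) → ℝ) : lorIp x (-y) = - lorIp x y := by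
  have := lorIp_smul_right (m := m) (-1) x y
  simpa using this

lemma vecMulVec_mulVec (a b z : Fin (m+1) → ℝ) :
    vecMulVec a b *ᵥ z = (b ⬝ᵥ z) • a := by
  ext i
  simp only [vecMulVec_apply, mulVec, dotProduct, Pi.smul_apply, smul_eq_mul,
    Finset.sum_mul]
  exact Finset.sum_congr rfl fun j _ => by ring

/-- The rolling matrix `A = (u x0ᵗ − x0 uᵗ) J` acting on a vector. -/
lemma rollA_mulVec (u x0 z : Fin (m+1) → ℝ) :
    ((vecMulVec u x0 - vecMulVec x0 u) * lorJ m) *ᵥ z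
      = lorIp x0 z • u - lorIp u z • x0 := by
  rw [← Matrix.mulVec_mulVec, Matrix.sub_mulVec, vecMulVec_mulVec, vecMulVec_mulVec]
  rfl

end LorAux

section ExpLemma

open LorAux

variable {m : ℕ}

lemma pow_mulVec_even_odd (A : Matrix (Fin (m+1)) (Fin (m+1)) ℝ)
    (v w : Fin (m+1) → ℝ) (κ : ℝ) (hv : A *ᵥ v = w) (hw : A *ᵥ w = -(κ • v)) :
    ∀ k : ℕ, A ^ (2*k) *ᵥ v = ((-κ)^k) • v ∧ A ^ (2*k+1) *ᵥ v = ((-κ)^k) • w := by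
  intro k
  induction k with
  | zero => simpa using hv
  | succ n ih =>
    obtain ⟨h1, h2⟩ := ih
    have key : A ^ (2*n+1+1) *ᵥ v = ((-κ)^(n+1)) • v := by
      rw [pow_succ' A (2*n+1), ← Matrix.mulVec_mulVec, h2, Matrix.mulVec_smul, hw]
      rw [smul_neg, smul_smul, pow_succ]
      module
    constructor
    · have : 2*(n+1) = 2*n+1+1 := by ring
      rw [this]; exact key
    · have : 2*(n+1)+1 = (2*n+1+1)+1 := by ring
      rw [this, pow_succ' A, ← Matrix.mulVec_mulVec, key, Matrix.mulVec_smul, hv]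

lemma exp_smul_mulVec (A : Matrix (Fin (m+1)) (Fin (m+1)) ℝ)
    (v w : Fin (m+1) → ℝ) (κ : ℝ) (hv : A *ᵥ v = w) (hw : A *ᵥ w = -(κ • v))
    {t c s : ℝ}
    (hc : HasSum (fun k : ℕ => (-κ)^k * t^(2*k) / (2*k)!) c)
    (hs : HasSum (fun k : ℕ => (-κ)^k * t^(2*k+1) / (2*k+1)!) s) :
    NormedSpace.exp (t • A) *ᵥ v = c • v + s • w := by
  letI : SeminormedRing (Matrix (Fin (m+1)) (Fin (m+1)) ℝ) := Matrix.linftyOpSemiNormedRing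
  letI : NormedRing (Matrix (Fin (m+1)) (Fin (m+1)) ℝ) := Matrix.linftyOpNormedRing
  letI : NormedAlgebra ℝ (Matrix (Fin (m+1)) (Fin (m+1)) ℝ) := Matrix.linftyOpNormedAlgebra
  -- the linear map `M ↦ M *ᵥ v` as a continuous linear map
  let L0 : Matrix (Fin (m+1)) (Fin (m+1)) ℝ →ₗ[ℝ] (Fin (m+1) → ℝ) :=
    { toFun := fun M => M *ᵥ v
      map_add' := fun M N => Matrix.add_mulVec M N v
      map_smul' := fun r M => Matrix.smul_mulVec r M v }
  let L := LinearMap.toContinuousLinearMap L0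
  have hexp : HasSum (fun n : ℕ => ((n ! : ℝ)⁻¹ • (t • A) ^ n) *ᵥ v)
      (NormedSpace.exp (t • A) *ᵥ v) := by
    have := (NormedSpace.exp_series_hasSum_exp' (𝕂 := ℝ) (t • A)).mapL L
    exact this
  have heq : (fun n : ℕ => ((n ! : ℝ)⁻¹ • (t • A) ^ n) *ᵥ v)
      = fun n : ℕ => ((n ! : ℝ)⁻¹ * t ^ n) • (A ^ n *ᵥ v) := by
    funext n
    rw [smul_pow, smul_mulVec, smul_mulVec, smul_smul]
  rw [heq] at hexp
  have h2 : HasSum (fun n : ℕ => ((n ! : ℝ)⁻¹ * t ^ n) • (A ^ n *ᵥ v)) (c • v + s • w) := by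
    refine HasSum.even_add_odd ?_ ?_
    · have h := hc.smul_const v
      have hfun : (fun k : ℕ => ((-κ)^k * t^(2*k) / (2*k)!) • v)
          = fun k : ℕ => (((2*k)! : ℝ)⁻¹ * t ^ (2*k)) • (A ^ (2*k) *ᵥ v) := by
        funext k
        rw [(pow_mulVec_even_odd A v w κ hv hw k).1, smul_smul]
        congr 1
        have h0 : ((2*k)! : ℝ) ≠ 0 := Nat.cast_ne_zero.mpr (Nat.factorial_ne_zero _)
        field_simp
      rw [hfun] at h
      exact h
    · have h := hs.smul_const w
      have hfun : (fun k : ℕ => ((-κ)^k * t^(2*k+1) / (2*k+1)!) • w)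
          = fun k : ℕ => (((2*k+1)! : ℝ)⁻¹ * t ^ (2*k+1)) • (A ^ (2*k+1) *ᵥ v) := by
        funext k
        rw [(pow_mulVec_even_odd A v w κ hv hw k).2, smul_smul]
        congr 1
        have h0 : ((2*k+1)! : ℝ) ≠ 0 := Nat.cast_ne_zero.mpr (Nat.factorial_ne_zero _)
        field_simp
      rw [hfun] at h
      exact h
  exact hexp.unique h2

end ExpLemma

section Master

open LorAux

variable {m : ℕ}

lemma roll_exp (u x0 : Fin (m+1) → ℝ) (hx0 : lorIp x0 x0 = 1) (hu : lorIp u x0 = 0)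
    {t c s : ℝ}
    (hc : HasSum (fun k : ℕ => (-(lorIp u u))^k * t^(2*k) / (2*k)!) c)
    (hs : HasSum (fun k : ℕ => (-(lorIp u u))^k * t^(2*k+1) / (2*k+1)!) s) :
    NormedSpace.exp (t • ((vecMulVec u x0 - vecMulVec x0 u) * lorJ m)) *ᵥ x0
      = c • x0 + s • u := by
  set A := (vecMulVec u x0 - vecMulVec x0 u) * lorJ m with hA
  have hA1 : A *ᵥ x0 = u := by
    rw [hA, rollA_mulVec, hx0, hu]; simp
  have hA2 : A *ᵥ u = -((lorIp u u) • x0) := by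
    rw [hA, rollA_mulVec, lorIp_comm x0 u, hu]; simp
  exact exp_smul_mulVec A x0 u (lorIp u u) hA1 hA2 hc hs

lemma hasSum_cos_aux (ω t : ℝ) :
    HasSum (fun k : ℕ => (-(ω^2))^k * t^(2*k) / (2*k)!) (Real.cos (ω*t)) := by
  have h := Real.hasSum_cos (ω*t)
  have hfun : (fun k : ℕ => (-1:ℝ)^k * (ω*t)^(2*k) / (2*k)!)
      = fun k : ℕ => (-(ω^2))^k * t^(2*k) / (2*k)! := by
    funext k
    have e1 : (ω*t)^(2*k) = (ω^2)^k * t^(2*k) := by rw [mul_pow, pow_mul]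
    rw [e1, neg_pow]
    ring
  rwa [hfun] at h

lemma hasSum_sin_aux (ω t : ℝ) (hω : ω ≠ 0) :
    HasSum (fun k : ℕ => (-(ω^2))^k * t^(2*k+1) / (2*k+1)!) (Real.sin (ω*t) / ω) := by
  have h := (Real.hasSum_sin (ω*t)).div_const ω
  have hfun : (fun k : ℕ => (-1:ℝ)^k * (ω*t)^(2*k+1) / (2*k+1)! / ω)
      = fun k : ℕ => (-(ω^2))^k * t^(2*k+1) / (2*k+1)! := by
    funext k
    have e2 : (ω*t)^(2*k+1) = (ω^2)^k * t^(2*k+1) * ω := by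
      rw [pow_succ, mul_pow, pow_mul, pow_succ]; ring
    rw [e2, neg_pow]
    field_simp
    ring
  rwa [hfun] at h

lemma hasSum_cosh_aux (ω t : ℝ) :
    HasSum (fun k : ℕ => (-(-(ω^2)))^k * t^(2*k) / (2*k)!) (Real.cosh (ω*t)) := by
  have h := Real.hasSum_cosh (ω*t)
  have hfun : (fun k : ℕ => ((ω*t))^(2*k) / (2*k)!)
      = fun k : ℕ => (-(-(ω^2)))^k * t^(2*k) / (2*k)! := by
    funext k
    have e1 : (ω*t)^(2*k) = (ω^2)^k * t^(2*k) := by rw [mul_pow, pow_mul]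
    rw [neg_neg, e1]
  rwa [hfun] at h

lemma hasSum_sinh_aux (ω t : ℝ) (hω : ω ≠ 0) :
    HasSum (fun k : ℕ => (-(-(ω^2)))^k * t^(2*k+1) / (2*k+1)!) (Real.sinh (ω*t) / ω) := by
  have h := (Real.hasSum_sinh (ω*t)).div_const ω
  have hfun : (fun k : ℕ => (ω*t)^(2*k+1) / (2*k+1)! / ω)
      = fun k : ℕ => (-(-(ω^2)))^k * t^(2*k+1) / (2*k+1)! := by
    funext k
    have e2 : (ω*t)^(2*k+1) = (ω^2)^k * t^(2*k+1) * ω := by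
      rw [pow_succ, mul_pow, pow_mul, pow_succ]; ring
    rw [neg_neg, e2]
    field_simp
  rwa [hfun] at h

lemma hasSum_one_aux (t : ℝ) :
    HasSum (fun k : ℕ => (-(0:ℝ))^k * t^(2*k) / (2*k)!) 1 := by
  have h := hasSum_single (f := fun k : ℕ => (-(0:ℝ))^k * t^(2*k) / (2*k)!) 0
    (fun k hk => by
      simp [neg_zero, zero_pow hk])
  simpa using h

lemma hasSum_id_aux (t : ℝ) :
    HasSum (fun k : ℕ => (-(0:ℝ))^k * t^(2*k+1) / (2*k+1)!) t := by
  have h := hasSum_single (f := fun k : ℕ => (-(0:ℝ))^k * t^(2*k+1) / (2*k+1)!) 0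
    (fun k hk => by
      simp [neg_zero, zero_pow hk])
  simpa using h

end Master

namespace LorAux

variable {m : ℕ}

lemma lorIp_single_left (j : Fin (m+1)) (hj : j ≠ 0) (c : ℝ) (y : Fin (m+1) → ℝ) :
    lorIp (Pi.single j c) y = c * y j := by
  rw [lorIp_eq, Finset.sum_eq_single j]
  · simp [hj]
  · intro b _ hb; simp [Pi.single_apply, hb]
  · simp

lemma exists_unit_ortho (hm : 2 ≤ m) (x0 : Fin (m+1) → ℝ) :
    ∃ u : Fin (m+1) → ℝ, lorIp u x0 = 0 ∧ lorIp u u = 1 := by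
  have h1m : (1 : ℕ) < m + 1 := by omega
  have h2m : (2 : ℕ) < m + 1 := by omega
  set i1 : Fin (m+1) := ⟨1, h1m⟩ with hi1
  set i2 : Fin (m+1) := ⟨2, h2m⟩ with hi2
  have hi10 : i1 ≠ 0 := by simp [hi1, Fin.ext_iff]
  have hi20 : i2 ≠ 0 := by simp [hi2, Fin.ext_iff]
  have hi12 : i1 ≠ i2 := by simp [hi1, hi2, Fin.ext_iff]
  by_cases h1 : x0 i1 = 0
  · refine ⟨Pi.single i1 1, ?_, ?_⟩
    · rw [lorIp_single_left i1 hi10]; simp [h1]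
    · rw [lorIp_single_left i1 hi10]; simp
  · set b : ℝ := Real.sqrt (x0 i1 ^ 2 + x0 i2 ^ 2) with hb
    have hsum : (0:ℝ) < x0 i1 ^ 2 + x0 i2 ^ 2 := by positivity
    have hbpos : 0 < b := Real.sqrt_pos.mpr hsum
    have hb2 : b ^ 2 = x0 i1 ^ 2 + x0 i2 ^ 2 := Real.sq_sqrt hsum.le
    refine ⟨Pi.single i1 (x0 i2 / b) + Pi.single i2 (-(x0 i1) / b), ?_, ?_⟩
    · rw [lorIp_add_left, lorIp_single_left i1 hi10, lorIp_single_left i2 hi20]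
      field_simp
      ring
    · rw [lorIp_add_left, lorIp_single_left i1 hi10, lorIp_single_left i2 hi20]
      have e1 : ((Pi.single i1 (x0 i2 / b) + Pi.single i2 (-(x0 i1) / b) : Fin (m+1) → ℝ)) i1
          = x0 i2 / b := by
        simp [Pi.single_apply, hi12, hi12.symm]
      have e2 : ((Pi.single i1 (x0 i2 / b) + Pi.single i2 (-(x0 i1) / b) : Fin (m+1) → ℝ)) i2
          = -(x0 i1) / b := by
        simp [Pi.single_apply, hi12, hi12.symm]
      rw [e1, e2]
      have hbne : b ≠ 0 := hbpos.ne'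
      field_simp
      nlinarith [hb2]

end LorAux

open LorAux in
/-- Geodesic reachability by rolling on the Lorentzian sphere: for `m ≥ 2` and
`x0, x1 ∈ S_1^m`, if `⟨x0,x1⟩_J > −1` or `x1 = −x0`, then there are `u` with
`⟨u,x0⟩_J = 0` and `t1 > 0` such that `exp(t1 (u x0ᵗ − x0 uᵗ) J) x0 = x1`. -/
theorem geodesic_reachability (m : ℕ) (hm : 2 ≤ m) (x0 x1 : Fin (m+1) → ℝ)
    (hx0 : lorIp x0 x0 = 1) (hx1 : lorIp x1 x1 = 1)
    (h : lorIp x0 x1 > -1 ∨ x1 = -x0) :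
    ∃ (u : Fin (m+1) → ℝ) (t1 : ℝ), lorIp u x0 = 0 ∧ 0 < t1 ∧
      NormedSpace.exp (t1 • ((vecMulVec u x0 - vecMulVec x0 u) * lorJ m)) *ᵥ x0
        = x1 := by
  rcases h with h | h
  · set a := lorIp x0 x1 with ha
    set u := x1 - a • x0 with hudef
    have hu0 : lorIp u x0 = 0 := by
      rw [hudef, lorIp_sub_left, lorIp_smul_left, hx0, lorIp_comm x1 x0]
      ring
    have huu : lorIp u u = 1 - a^2 := by
      rw [hudef, lorIp_sub_left, lorIp_smul_left, lorIp_sub_right, lorIp_sub_right,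
        lorIp_smul_right, lorIp_smul_right, hx1, hx0, lorIp_comm x1 x0]
      ring
    rcases lt_trichotomy a 1 with hlt | heq | hgt
    · -- elliptic case: -1 < a < 1
      set ω := Real.sqrt (1 - a^2) with hω
      have ha2 : a^2 < 1 := by nlinarith
      have hωpos : 0 < ω := Real.sqrt_pos.mpr (by nlinarith)
      have hω2 : ω^2 = 1 - a^2 := Real.sq_sqrt (by nlinarith)
      have hωne : ω ≠ 0 := hωpos.ne'
      set t1 := Real.arccos a / ω with ht1
      have ht1pos : 0 < t1 := div_pos (Real.arccos_pos.mpr hlt) hωpos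
      have hωt : ω * t1 = Real.arccos a := by rw [ht1]; field_simp
      refine ⟨u, t1, hu0, ht1pos, ?_⟩
      have hc' : HasSum (fun k : ℕ => (-(lorIp u u))^k * t1^(2*k) / (2*k)!) a := by
        rw [huu, ← hω2]
        have hcc := hasSum_cos_aux ω t1
        rwa [hωt, Real.cos_arccos (by linarith) hlt.le] at hcc
      have hs' : HasSum (fun k : ℕ => (-(lorIp u u))^k * t1^(2*k+1) / (2*k+1)!) 1 := by
        rw [huu, ← hω2]
        have hss := hasSum_sin_aux ω t1 hωne
        rwa [hωt, Real.sin_arccos, ← hω, div_self hωne] at hss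
      rw [roll_exp u x0 hx0 hu0 hc' hs', hudef]
      module
    · -- parabolic case: a = 1
      refine ⟨u, 1, hu0, one_pos, ?_⟩
      have hκ : lorIp u u = 0 := by rw [huu, heq]; ring
      have hc' : HasSum (fun k : ℕ => (-(lorIp u u))^k * (1:ℝ)^(2*k) / (2*k)!) 1 := by
        rw [hκ]; exact hasSum_one_aux 1
      have hs' : HasSum (fun k : ℕ => (-(lorIp u u))^k * (1:ℝ)^(2*k+1) / (2*k+1)!) 1 := by
        rw [hκ]; exact hasSum_id_aux 1
      rw [roll_exp u x0 hx0 hu0 hc' hs', hudef, heq]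
      module
    · -- hyperbolic case: a > 1
      set ω := Real.sqrt (a^2 - 1) with hω
      have hωpos : 0 < ω := Real.sqrt_pos.mpr (by nlinarith)
      have hω2 : ω^2 = a^2 - 1 := Real.sq_sqrt (by nlinarith)
      have hωne : ω ≠ 0 := hωpos.ne'
      set t1 := Real.arsinh ω / ω with ht1
      have ht1pos : 0 < t1 := div_pos (Real.arsinh_pos_iff.mpr hωpos) hωpos
      have hωt : ω * t1 = Real.arsinh ω := by rw [ht1]; field_simp
      refine ⟨u, t1, hu0, ht1pos, ?_⟩
      have hval : -(lorIp u u) = -(-(ω^2)) := by rw [huu, hω2]; ring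
      have hc' : HasSum (fun k : ℕ => (-(lorIp u u))^k * t1^(2*k) / (2*k)!) a := by
        rw [hval]
        have hcc := hasSum_cosh_aux ω t1
        rwa [hωt, Real.cosh_arsinh, show (1 + ω^2) = a^2 by rw [hω2]; ring,
          Real.sqrt_sq (by linarith)] at hcc
      have hs' : HasSum (fun k : ℕ => (-(lorIp u u))^k * t1^(2*k+1) / (2*k+1)!) 1 := by
        rw [hval]
        have hss := hasSum_sinh_aux ω t1 hωne
        rwa [hωt, Real.sinh_arsinh, div_self hωne] at hss
      rw [roll_exp u x0 hx0 hu0 hc' hs', hudef]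
      module
  · -- antipodal case: x1 = -x0
    obtain ⟨u, hu0, huu⟩ := exists_unit_ortho hm x0
    refine ⟨u, π, hu0, Real.pi_pos, ?_⟩
    have hc' : HasSum (fun k : ℕ => (-(lorIp u u))^k * π^(2*k) / (2*k)!) (-1) := by
      rw [huu]
      have hcc := hasSum_cos_aux 1 π
      rw [one_mul, Real.cos_pi] at hcc
      simpa using hcc
    have hs' : HasSum (fun k : ℕ => (-(lorIp u u))^k * π^(2*k+1) / (2*k+1)!) 0 := by
      rw [huu]
      have hss := hasSum_sin_aux 1 π one_ne_zero
      rw [one_mul, Real.sin_pi, zero_div] at hss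
      simpa using hss
    rw [roll_exp u x0 hx0 hu0 hc' hs', h]
    module
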